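/- For every integer n with 2 ≤ n ≤ 472 one has δ_n < 0, and for every integer n ≥ 473 one has δ_n > 0. In particular δ_n ≠ 0 for every integer n ≥ 2. -/

import Mathlib

/-- `δ_n = (1/(4n))·∑_{l=1}^{n−1} 1/sin(πl/n) − 1`. -/
noncomputable def deltaN (n : ℕ) : ℝ :=
  (1 / (4 * (n : ℝ))) * ∑ l ∈ Finset.Icc 1 (n - 1), 1 / Real.sin (Real.pi * l / n) - 1

/-- `h_n(x,θ) = (1/n)·∑_{l=1}^{n} (1 − x·cos(2πl/n + θ))/(1 + x² − 2x·cos(2πl/n + θ))^{3/2}`. -/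
noncomputable def hN (n : ℕ) (x θ : ℝ) : ℝ :=
  (1 / (n : ℝ)) * ∑ l ∈ Finset.Icc 1 n,
    (1 - x * Real.cos (2 * Real.pi * l / n + θ)) /
      (1 + x ^ 2 - 2 * x * Real.cos (2 * Real.pi * l / n + θ)) ^ ((3 : ℝ) / 2)

/-- `k_n(x,θ) = h_n(x,θ) − 1`. -/
noncomputable def kN (n : ℕ) (x θ : ℝ) : ℝ := hN n x θ - 1

open Real Set Finset


open Real Set

lemma nonneg_of_deriv' (f f' : ℝ → ℝ) (hd : ∀ x, HasDerivAt f (f' x) x)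
    (h0 : f 0 = 0) (hf' : ∀ x, 0 ≤ x → 0 ≤ f' x) {x : ℝ} (hx : 0 ≤ x) : 0 ≤ f x := by
  have hmono : MonotoneOn f (Ici 0) := by
    apply monotoneOn_of_deriv_nonneg (convex_Ici 0)
      (fun y _ => (hd y).continuousAt.continuousWithinAt)
      (fun y _ => (hd y).differentiableAt.differentiableWithinAt)
    intro y hy
    rw [(hd y).deriv]
    rw [interior_Ici] at hy
    exact hf' y (le_of_lt hy)
  calc (0:ℝ) = f 0 := h0.symm
    _ ≤ f x := hmono self_mem_Ici hx hx

lemma sin_ge_sub_cube' {x : ℝ} (hx : 0 ≤ x) : x - x^3/6 ≤ Real.sin x := by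
  have := nonneg_of_deriv' (fun t => Real.sin t - (t - t^3/6))
    (fun t => Real.cos t - (1 - t^2/2))
    (fun y => by
      have h1 := (hasDerivAt_id y).sub ((hasDerivAt_pow 3 y).div_const 6)
      have := (Real.hasDerivAt_sin y).sub h1
      refine this.congr_deriv ?_
      push_cast
      ring)
    (by simp)
    (fun y _ => sub_nonneg.2 Real.one_sub_sq_div_two_le_cos) hx
  linarith [this]

lemma sin_le_p5 {x : ℝ} (hx : 0 ≤ x) : Real.sin x ≤ x - x^3/6 + x^5/120 := by
  have hcos : ∀ y : ℝ, 0 ≤ y → Real.cos y ≤ 1 - y^2/2 + y^4/24 := by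
    intro y hy
    have := nonneg_of_deriv' (fun t => (1 - t^2/2 + t^4/24) - Real.cos t)
      (fun t => (t^3/6 - t) + Real.sin t)
      (fun z => by
        have h1 := (((hasDerivAt_pow 2 z).div_const 2).const_sub 1).add
          ((hasDerivAt_pow 4 z).div_const 24)
        have := h1.sub (Real.hasDerivAt_cos z)
        refine this.congr_deriv ?_
        push_cast
        ring)
      (by simp)
      (fun z hz => by have := sin_ge_sub_cube' hz; linarith) hy
    linarith [this]
  have := nonneg_of_deriv' (fun t => (t - t^3/6 + t^5/120) - Real.sin t)
    (fun t => (1 - t^2/2 + t^4/24) - Real.cos t)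
    (fun z => by
      have h1 := ((hasDerivAt_id z).sub ((hasDerivAt_pow 3 z).div_const 6)).add
        ((hasDerivAt_pow 5 z).div_const 120)
      have := h1.sub (Real.hasDerivAt_sin z)
      refine this.congr_deriv ?_
      push_cast
      ring)
    (by simp)
    (fun z hz => by
      rcases le_or_gt 0 z with h | h
      · exact sub_nonneg.2 (hcos z h)
      · linarith) hx
  linarith [this]

lemma cos_ge_p6 {x : ℝ} (hx : 0 ≤ x) : 1 - x^2/2 + x^4/24 - x^6/720 ≤ Real.cos x := by
  have := nonneg_of_deriv' (fun t => Real.cos t - (1 - t^2/2 + t^4/24 - t^6/720))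
    (fun t => (t - t^3/6 + t^5/120) - Real.sin t)
    (fun z => by
      have h1 := ((((hasDerivAt_pow 2 z).div_const 2).const_sub 1).add
        ((hasDerivAt_pow 4 z).div_const 24)).sub ((hasDerivAt_pow 6 z).div_const 720)
      have := (Real.hasDerivAt_cos z).sub h1
      refine this.congr_deriv ?_
      push_cast
      ring)
    (by simp)
    (fun z hz => by
      rcases le_or_gt 0 z with h | h
      · exact sub_nonneg.2 (sin_le_p5 h)
      · nlinarith [Real.neg_one_le_sin z]) hx
  linarith [this]

lemma sin_ge_p7 {x : ℝ} (hx : 0 ≤ x) : x - x^3/6 + x^5/120 - x^7/5040 ≤ Real.sin x := by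
  have := nonneg_of_deriv' (fun t => Real.sin t - (t - t^3/6 + t^5/120 - t^7/5040))
    (fun t => Real.cos t - (1 - t^2/2 + t^4/24 - t^6/720))
    (fun z => by
      have h1 := (((hasDerivAt_id z).sub ((hasDerivAt_pow 3 z).div_const 6)).add
        ((hasDerivAt_pow 5 z).div_const 120)).sub ((hasDerivAt_pow 7 z).div_const 5040)
      have := (Real.hasDerivAt_sin z).sub h1
      refine this.congr_deriv ?_
      push_cast
      ring)
    (by simp)
    (fun z hz => by
      rcases le_or_gt 0 z with h | h
      · exact sub_nonneg.2 (cos_ge_p6 h)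
      · nlinarith [Real.neg_one_le_cos z]) hx
  linarith [this]

lemma cos_le_p8 {x : ℝ} (hx : 0 ≤ x) : Real.cos x ≤ 1 - x^2/2 + x^4/24 - x^6/720 + x^8/40320 := by
  have := nonneg_of_deriv' (fun t => (1 - t^2/2 + t^4/24 - t^6/720 + t^8/40320) - Real.cos t)
    (fun t => ((t^3/6 + t^7/5040) - (t + t^5/120)) + Real.sin t)
    (fun z => by
      have h1 := (((((hasDerivAt_pow 2 z).div_const 2).const_sub 1).add
        ((hasDerivAt_pow 4 z).div_const 24)).sub ((hasDerivAt_pow 6 z).div_const 720)).add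
        ((hasDerivAt_pow 8 z).div_const 40320)
      have := h1.sub (Real.hasDerivAt_cos z)
      refine this.congr_deriv ?_
      push_cast
      ring)
    (by simp)
    (fun z hz => by have := sin_ge_p7 hz; linarith) hx
  linarith [this]

lemma sin_le_p9 {x : ℝ} (hx : 0 ≤ x) :
    Real.sin x ≤ x - x^3/6 + x^5/120 - x^7/5040 + x^9/362880 := by
  have := nonneg_of_deriv' (fun t => (t - t^3/6 + t^5/120 - t^7/5040 + t^9/362880) - Real.sin t)
    (fun t => (1 - t^2/2 + t^4/24 - t^6/720 + t^8/40320) - Real.cos t)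
    (fun z => by
      have h1 := ((((hasDerivAt_id z).sub ((hasDerivAt_pow 3 z).div_const 6)).add
        ((hasDerivAt_pow 5 z).div_const 120)).sub ((hasDerivAt_pow 7 z).div_const 5040)).add
        ((hasDerivAt_pow 9 z).div_const 362880)
      have := h1.sub (Real.hasDerivAt_sin z)
      refine this.congr_deriv ?_
      push_cast
      ring)
    (by simp)
    (fun z hz => by
      rcases le_or_gt 0 z with h | h
      · exact sub_nonneg.2 (cos_le_p8 h)
      · nlinarith [Real.neg_one_le_cos z, Real.cos_le_one z]) hx
  linarith [this]

lemma convex_one_div_sin : ConvexOn ℝ (Set.Ioo (0:ℝ) 1) (fun x => 1 / Real.sin (π * x)) := by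
  have hsin : ∀ x ∈ Set.Ioo (0:ℝ) 1, 0 < Real.sin (π * x) := by
    intro x hx
    apply Real.sin_pos_of_pos_of_lt_pi
    · exact mul_pos Real.pi_pos hx.1
    · nlinarith [Real.pi_pos, hx.2]
  have hint : interior (Set.Ioo (0:ℝ) 1) = Set.Ioo (0:ℝ) 1 := interior_Ioo
  apply convexOn_of_hasDerivWithinAt2_nonneg (convex_Ioo 0 1)
    (f' := fun x => -(π * Real.cos (π * x)) / (Real.sin (π * x))^2)
    (f'' := fun x => (π * (Real.sin (π * x) * π) * Real.sin (π * x) ^ 2 -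
      -(π * Real.cos (π * x)) * (2 * Real.sin (π * x) * (Real.cos (π * x) * π))) /
        (Real.sin (π * x) ^ 2) ^ 2)
  · -- continuity
    apply ContinuousOn.div continuousOn_const
    · exact (Real.continuous_sin.comp (continuous_const.mul continuous_id)).continuousOn
    · intro x hx; exact (hsin x hx).ne'
  · rw [hint]
    intro x hx
    have hs : HasDerivAt (fun x : ℝ => Real.sin (π * x)) (Real.cos (π * x) * π) x :=
      (Real.hasDerivAt_sin (π * x)).comp x ((hasDerivAt_id x).const_mul π) |>.congr_deriv (by ring)
    have := hs.inv (hsin x hx).ne'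
    have h2 : HasDerivAt (fun x : ℝ => 1 / Real.sin (π * x))
        (-(π * Real.cos (π * x)) / (Real.sin (π * x))^2) x := by
      simp only [one_div]
      refine this.congr_deriv ?_
      ring
    exact h2.hasDerivWithinAt
  · rw [hint]
    intro x hx
    have hs : HasDerivAt (fun x : ℝ => Real.sin (π * x)) (Real.cos (π * x) * π) x :=
      (Real.hasDerivAt_sin (π * x)).comp x ((hasDerivAt_id x).const_mul π) |>.congr_deriv (by ring)
    have hc : HasDerivAt (fun x : ℝ => -(π * Real.cos (π * x))) (π * (Real.sin (π * x) * π)) x := by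
      have := ((Real.hasDerivAt_cos (π * x)).comp x ((hasDerivAt_id x).const_mul π)).const_mul π
      refine this.neg.congr_deriv ?_
      · ring
    have hsq : HasDerivAt (fun x : ℝ => (Real.sin (π * x))^2)
        (2 * Real.sin (π * x) * (Real.cos (π * x) * π)) x := by
      have := hs.pow 2
      refine this.congr_deriv ?_
      push_cast
      ring
    have := hc.div hsq (pow_ne_zero 2 (hsin x hx).ne')
    exact this.hasDerivWithinAt
  · rw [hint]
    intro x hx
    have h1 := hsin x hx
    have h2 : (0:ℝ) < π := Real.pi_pos
    apply div_nonneg _ (by positivity)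
    have heq : π * (Real.sin (π * x) * π) * Real.sin (π * x) ^ 2 -
        -(π * Real.cos (π * x)) * (2 * Real.sin (π * x) * (Real.cos (π * x) * π)) =
        π ^ 2 * Real.sin (π * x) * (Real.sin (π * x) ^ 2 + 2 * Real.cos (π * x) ^ 2) := by
      ring
    rw [heq]
    positivity

def a472 (l : ℕ) : ℕ := 3141592 * min l (472 - l)
def M472 (l : ℕ) : ℕ :=
  5040*472000000^6 + 42*(a472 l)^4*472000000^2 - (840*(a472 l)^2*472000000^4 + (a472 l)^6)
def c472 (l : ℕ) : ℕ := (5040*472000000^7*2^24) / (a472 l * M472 l) + 1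

set_option maxRecDepth 40000 in
lemma c472_sum : (∑ l ∈ Finset.Icc 1 471, c472 l) < 1888 * 2^24 := by decide

lemma nat_lt_div_succ_mul (X Y : ℕ) (hY : 0 < Y) : X < Y * (X / Y + 1) := by
  have h1 := Nat.div_add_mod X Y
  have h2 := Nat.mod_lt X hY
  calc X = Y * (X / Y) + X % Y := h1.symm
    _ < Y * (X / Y) + Y := by omega
    _ = Y * (X / Y + 1) := by ring

lemma sin_eq_min (n l m : ℕ) (hm : m = min l (n - l)) (h1 : 1 ≤ l) (h2 : l ≤ n - 1)
    (hn : 1 ≤ n) : Real.sin (π * l / n) = Real.sin (π * m / n) := by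
  rcases le_or_gt l (n - l) with h | h
  · rw [hm, min_eq_left h]
  · rw [hm, min_eq_right h.le]
    have hln : l ≤ n := by omega
    have hcast : ((n - l : ℕ) : ℝ) = (n:ℝ) - l := by push_cast [hln]; ring
    rw [hcast]
    have hnR : (0:ℝ) < n := by
      have : 0 < n := by omega
      exact_mod_cast this
    have harg : π * ((n:ℝ) - l) / n = π - π * l / n := by field_simp
    rw [harg, Real.sin_pi_sub]

set_option maxHeartbeats 1000000 in
lemma term_upper_472 (l : ℕ) (hl : l ∈ Finset.Icc 1 471) :
    1 / Real.sin (π * l / 472) ≤ (c472 l : ℝ) / 2^24 := by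
  rw [Finset.mem_Icc] at hl
  have hm : min l (472 - l) = min l (472 - l) := rfl
  set m : ℕ := min l (472 - l) with hmdef
  have hm1 : 1 ≤ m := by omega
  have hm236 : m ≤ 236 := by omega
  have hmR : (1:ℝ) ≤ (m:ℝ) := by exact_mod_cast hm1
  have hmR' : (m:ℝ) ≤ 236 := by exact_mod_cast hm236
  have hsin_eq : Real.sin (π * l / 472) = Real.sin (π * m / 472) := by
    have h := sin_eq_min 472 l m hmdef hl.1 (by omega) (by norm_num)
    exact_mod_cast h
  rw [hsin_eq]
  have haR : ((a472 l : ℕ) : ℝ) = 3141592 * (m:ℝ) := by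
    rw [a472, ← hmdef]; push_cast; ring
  set r : ℝ := ((a472 l : ℕ) : ℝ) / 472000000 with hrdef
  have hr0 : 0 < r := by rw [hrdef, haR]; positivity
  have hrle : r ≤ π * m / 472 := by
    rw [hrdef, haR]
    have h1 : (3.141592:ℝ) * m ≤ π * m :=
      mul_le_mul_of_nonneg_right Real.pi_gt_d6.le (by positivity)
    nlinarith [h1]
  have hple : π * m / 472 ≤ π / 2 := by
    have h1 : π * (m:ℝ) ≤ π * 236 := mul_le_mul_of_nonneg_left hmR' Real.pi_pos.le
    calc π * (m:ℝ) / 472 ≤ π * 236 / 472 := by linarith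
      _ = π / 2 := by ring
  have hr158 : r ≤ 1.5708 := by nlinarith [Real.pi_lt_d6, hrle, hple]
  have hsinge : Real.sin r ≤ Real.sin (π * m / 472) := by
    rcases eq_or_lt_of_le hrle with h | h
    · rw [h]
    · exact (Real.sin_lt_sin_of_lt_of_le_pi_div_two (by linarith [Real.pi_pos]) hple h).le
  have hp7 : r - r^3/6 + r^5/120 - r^7/5040 ≤ Real.sin r := sin_ge_p7 hr0.le
  have hP7pos : 0 < r - r^3/6 + r^5/120 - r^7/5040 := by
    nlinarith [hr0, hr158, sq_nonneg r, pow_pos hr0 3, pow_pos hr0 5, pow_pos hr0 7,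
      sq_nonneg (r^2), sq_nonneg (r^3)]
  have hsinpos : 0 < Real.sin (π * m / 472) := by linarith
  have step1 : 1 / Real.sin (π * m / 472) ≤ 1 / (r - r^3/6 + r^5/120 - r^7/5040) :=
    one_div_le_one_div_of_le hP7pos (le_trans hp7 hsinge)
  -- Nat-level facts
  have ha2b : a472 l ≤ 2 * 472000000 := by
    have h1 : a472 l = 3141592 * m := by rw [a472, ← hmdef]
    have h2 : 3141592 * m ≤ 3141592 * 236 := Nat.mul_le_mul_left _ hm236
    omega
  have hsub : 840*(a472 l)^2*472000000^4 + (a472 l)^6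
      ≤ 5040*472000000^6 + 42*(a472 l)^4*472000000^2 := by
    have h2 : (a472 l)^2 ≤ (2*472000000)^2 := Nat.pow_le_pow_left ha2b 2
    have h6 : (a472 l)^6 ≤ (2*472000000)^6 := Nat.pow_le_pow_left ha2b 6
    have hb4 : 840*(a472 l)^2*472000000^4 ≤ 840*((2*472000000)^2)*472000000^4 :=
      Nat.mul_le_mul_right _ (Nat.mul_le_mul_left _ h2)
    calc 840*(a472 l)^2*472000000^4 + (a472 l)^6
        ≤ 840*((2*472000000)^2)*472000000^4 + (2*472000000)^6 := Nat.add_le_add hb4 h6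
      _ ≤ 5040*472000000^6 := by norm_num
      _ ≤ 5040*472000000^6 + 42*(a472 l)^4*472000000^2 := Nat.le_add_right _ _
  have hMcast : ((M472 l : ℕ) : ℝ)
      = 5040*(472000000:ℝ)^6 + 42*((a472 l : ℕ):ℝ)^4*(472000000:ℝ)^2
        - (840*((a472 l : ℕ):ℝ)^2*(472000000:ℝ)^4 + ((a472 l : ℕ):ℝ)^6) := by
    rw [M472, Nat.cast_sub hsub]
    push_cast
    ring
  have haRpos : (0:ℝ) < ((a472 l : ℕ):ℝ) := by rw [haR]; positivity
  have hP7eq : r - r^3/6 + r^5/120 - r^7/5040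
      = ((a472 l : ℕ):ℝ) * ((M472 l : ℕ):ℝ) / (5040 * (472000000:ℝ)^7) := by
    rw [hMcast, hrdef]
    field_simp
    ring
  have hMpos : (0:ℝ) < ((M472 l : ℕ):ℝ) := by
    by_contra hcon
    push_neg at hcon
    have hle : ((a472 l : ℕ):ℝ) * ((M472 l : ℕ):ℝ) / (5040 * (472000000:ℝ)^7) ≤ 0 := by
      apply div_nonpos_of_nonpos_of_nonneg
      · exact mul_nonpos_of_nonneg_of_nonpos haRpos.le hcon
      · positivity
    rw [← hP7eq] at hle
    linarith
  have hYpos : 0 < a472 l * M472 l := by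
    have hM : 0 < M472 l := by exact_mod_cast hMpos
    have hA : 0 < a472 l := by
      have h1 : a472 l = 3141592 * m := by rw [a472, ← hmdef]
      omega
    exact Nat.mul_pos hA hM
  have hdiv := nat_lt_div_succ_mul (5040*472000000^7*2^24) (a472 l * M472 l) hYpos
  have hdivR : (5040 * (472000000:ℝ)^7 * 2^24)
      < (((a472 l : ℕ):ℝ) * ((M472 l : ℕ):ℝ)) * (c472 l : ℝ) := by
    have hcast : ((5040*472000000^7*2^24 : ℕ) : ℝ)
        < (((a472 l * M472 l) * (5040*472000000^7*2^24 / (a472 l * M472 l) + 1) : ℕ) : ℝ) := by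
      exact_mod_cast hdiv
    rw [c472]
    push_cast at hcast ⊢
    nlinarith [hcast]
  have step2 : 1 / (r - r^3/6 + r^5/120 - r^7/5040) ≤ (c472 l : ℝ) / 2^24 := by
    rw [hP7eq, one_div_div, div_le_div_iff₀ (by positivity) (by positivity)]
    nlinarith [hdivR]
  linarith [step1, step2]

def a473 (l : ℕ) : ℕ := 3141593 * min l (473 - l)
def M473 (l : ℕ) : ℕ :=
  362880*473000000^8 + 3024*(a473 l)^4*473000000^4 + (a473 l)^8
    - (60480*(a473 l)^2*473000000^6 + 72*(a473 l)^6*473000000^2)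
def c473 (l : ℕ) : ℕ := (362880*473000000^9*2^24) / (a473 l * M473 l)

set_option maxRecDepth 40000 in
lemma c473_sum : 1892 * 2^24 < (∑ l ∈ Finset.Icc 1 472, c473 l) := by decide

set_option maxHeartbeats 1000000 in
lemma term_lower_473 (l : ℕ) (hl : l ∈ Finset.Icc 1 472) :
    (c473 l : ℝ) / 2^24 ≤ 1 / Real.sin (π * l / 473) := by
  rw [Finset.mem_Icc] at hl
  set m : ℕ := min l (473 - l) with hmdef
  have hm1 : 1 ≤ m := by omega
  have hm236 : m ≤ 236 := by omega
  have hmR : (1:ℝ) ≤ (m:ℝ) := by exact_mod_cast hm1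
  have hmR' : (m:ℝ) ≤ 236 := by exact_mod_cast hm236
  have hsin_eq : Real.sin (π * l / 473) = Real.sin (π * m / 473) := by
    have h := sin_eq_min 473 l m hmdef hl.1 (by omega) (by norm_num)
    exact_mod_cast h
  rw [hsin_eq]
  have haR : ((a473 l : ℕ) : ℝ) = 3141593 * (m:ℝ) := by
    rw [a473, ← hmdef]; push_cast; ring
  set s : ℝ := ((a473 l : ℕ) : ℝ) / 473000000 with hsdef
  have hs0 : 0 < s := by rw [hsdef, haR]; positivity
  have hsge : π * m / 473 ≤ s := by
    rw [hsdef, haR]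
    have h1 : π * (m:ℝ) ≤ 3.141593 * m :=
      mul_le_mul_of_nonneg_right Real.pi_lt_d6.le (by positivity)
    nlinarith [h1]
  have hs157 : s ≤ 1.5676 := by
    rw [hsdef, haR]
    nlinarith [hmR']
  have hsle : s ≤ π / 2 := by
    nlinarith [Real.pi_gt_d6, hs157]
  have hmpos : 0 < π * m / 473 := by positivity
  have hsinles : Real.sin (π * m / 473) ≤ Real.sin s := by
    rcases eq_or_lt_of_le hsge with h | h
    · rw [h]
    · exact (Real.sin_lt_sin_of_lt_of_le_pi_div_two (by nlinarith [Real.pi_pos]) hsle h).le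
  have hp9 : Real.sin s ≤ s - s^3/6 + s^5/120 - s^7/5040 + s^9/362880 := sin_le_p9 hs0.le
  have hsinpos : 0 < Real.sin (π * m / 473) := by
    apply Real.sin_pos_of_pos_of_lt_pi hmpos
    have : (m:ℝ) < 473 := by linarith
    rw [div_lt_iff₀ (by norm_num)]
    nlinarith [Real.pi_pos]
  have hP9pos : 0 < s - s^3/6 + s^5/120 - s^7/5040 + s^9/362880 := by
    have hsins : 0 < Real.sin s := by
      apply Real.sin_pos_of_pos_of_lt_pi hs0
      nlinarith [Real.pi_gt_d6]
    linarith
  have step1 : 1 / (s - s^3/6 + s^5/120 - s^7/5040 + s^9/362880)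
      ≤ 1 / Real.sin (π * m / 473) :=
    one_div_le_one_div_of_le hsinpos (le_trans hsinles hp9)
  -- Nat-level facts
  have ha2b : a473 l ≤ 2 * 473000000 := by
    have h1 : a473 l = 3141593 * m := by rw [a473, ← hmdef]
    have h2 : 3141593 * m ≤ 3141593 * 236 := Nat.mul_le_mul_left _ hm236
    omega
  have hsub : 60480*(a473 l)^2*473000000^6 + 72*(a473 l)^6*473000000^2
      ≤ 362880*473000000^8 + 3024*(a473 l)^4*473000000^4 + (a473 l)^8 := by
    have h2 : (a473 l)^2 ≤ (2*473000000)^2 := Nat.pow_le_pow_left ha2b 2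
    have h6 : (a473 l)^6 ≤ (2*473000000)^6 := Nat.pow_le_pow_left ha2b 6
    have hb1 : 60480*(a473 l)^2*473000000^6 ≤ 60480*((2*473000000)^2)*473000000^6 :=
      Nat.mul_le_mul_right _ (Nat.mul_le_mul_left _ h2)
    have hb2 : 72*(a473 l)^6*473000000^2 ≤ 72*((2*473000000)^6)*473000000^2 :=
      Nat.mul_le_mul_right _ (Nat.mul_le_mul_left _ h6)
    calc 60480*(a473 l)^2*473000000^6 + 72*(a473 l)^6*473000000^2
        ≤ 60480*((2*473000000)^2)*473000000^6 + 72*((2*473000000)^6)*473000000^2 :=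
          Nat.add_le_add hb1 hb2
      _ ≤ 362880*473000000^8 := by norm_num
      _ ≤ 362880*473000000^8 + 3024*(a473 l)^4*473000000^4 + (a473 l)^8 :=
          le_trans (Nat.le_add_right _ _) (Nat.le_add_right _ _)
  have hMcast : ((M473 l : ℕ) : ℝ)
      = 362880*(473000000:ℝ)^8 + 3024*((a473 l : ℕ):ℝ)^4*(473000000:ℝ)^4
        + ((a473 l : ℕ):ℝ)^8
        - (60480*((a473 l : ℕ):ℝ)^2*(473000000:ℝ)^6 + 72*((a473 l : ℕ):ℝ)^6*(473000000:ℝ)^2) := by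
    rw [M473, Nat.cast_sub hsub]
    push_cast
    ring
  have haRpos : (0:ℝ) < ((a473 l : ℕ):ℝ) := by rw [haR]; positivity
  have hP9eq : s - s^3/6 + s^5/120 - s^7/5040 + s^9/362880
      = ((a473 l : ℕ):ℝ) * ((M473 l : ℕ):ℝ) / (362880 * (473000000:ℝ)^9) := by
    rw [hMcast, hsdef]
    field_simp
    ring
  have hMpos : (0:ℝ) < ((M473 l : ℕ):ℝ) := by
    by_contra hcon
    push_neg at hcon
    have hle : ((a473 l : ℕ):ℝ) * ((M473 l : ℕ):ℝ) / (362880 * (473000000:ℝ)^9) ≤ 0 := by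
      apply div_nonpos_of_nonpos_of_nonneg
      · exact mul_nonpos_of_nonneg_of_nonpos haRpos.le hcon
      · positivity
    rw [← hP9eq] at hle
    linarith
  have hYposR : (0:ℝ) < ((a473 l : ℕ):ℝ) * ((M473 l : ℕ):ℝ) := mul_pos haRpos hMpos
  -- cast division bound
  have hc : (c473 l : ℝ) ≤ (362880*(473000000:ℝ)^9*2^24) / (((a473 l : ℕ):ℝ) * ((M473 l : ℕ):ℝ)) := by
    rw [c473]
    have h := Nat.cast_div_le (α := ℝ) (m := 362880*473000000^9*2^24) (n := a473 l * M473 l)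
    calc ((362880*473000000^9*2^24 / (a473 l * M473 l) : ℕ) : ℝ)
        ≤ ((362880*473000000^9*2^24 : ℕ):ℝ) / ((a473 l * M473 l : ℕ):ℝ) := h
      _ = (362880*(473000000:ℝ)^9*2^24) / (((a473 l : ℕ):ℝ) * ((M473 l : ℕ):ℝ)) := by
          push_cast
          ring_nf
  have step2 : (c473 l : ℝ) / 2^24
      ≤ 1 / (s - s^3/6 + s^5/120 - s^7/5040 + s^9/362880) := by
    rw [hP9eq, one_div_div, div_le_div_iff₀ (by positivity) hYposR]
    have h1 : (c473 l : ℝ) * (((a473 l : ℕ):ℝ) * ((M473 l : ℕ):ℝ))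
        ≤ 362880*(473000000:ℝ)^9*2^24 := by
      exact (le_div_iff₀ hYposR).mp hc
    nlinarith [h1]
  linarith [step1, step2]

lemma deltaN_eq (n : ℕ) (hn : 1 ≤ n) :
    deltaN n = (1 / (4 * (n : ℝ))) * ∑ i ∈ Finset.range (n - 1),
      (fun x => 1 / Real.sin (π * x)) ((i + 1 : ℝ) / n) - 1 := by
  unfold deltaN
  congr 2
  rw [← Finset.Ico_add_one_right_eq_Icc, Nat.sub_add_cancel hn,
    Finset.sum_Ico_eq_sum_range]
  apply Finset.sum_congr rfl
  intro i _
  push_cast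
  rw [mul_div_assoc]
  ring_nf

lemma sin_term_pos {n m : ℕ} (hm : 1 ≤ m) (hmn : m ≤ n - 1) (hn : 1 ≤ n) :
    0 < Real.sin (π * m / n) := by
  have hn' : (0:ℝ) < n := by positivity
  apply Real.sin_pos_of_pos_of_lt_pi
  · have : (0:ℝ) < m := by exact_mod_cast hm
    positivity
  · have h1 : (m:ℝ) < n := by
      have : m < n := by omega
      exact_mod_cast this
    rw [div_lt_iff₀ hn'] at *
    nlinarith [Real.pi_pos]

lemma deltaN_mono_step (n : ℕ) (hn : 2 ≤ n) : deltaN n ≤ deltaN (n + 1) := by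
  set g : ℝ → ℝ := fun x => 1 / Real.sin (π * x) with hg
  have hnR : (0:ℝ) < n := by positivity
  have hn1R : (0:ℝ) < (n:ℝ) + 1 := by positivity
  -- membership
  have hmem : ∀ i : ℕ, i < n → ((i:ℝ) + 1) / ((n:ℝ) + 1) ∈ Set.Ioo (0:ℝ) 1 := by
    intro i hi
    constructor
    · positivity
    · rw [div_lt_one hn1R]
      have : (i:ℝ) < n := by exact_mod_cast hi
      linarith
  -- pointwise convexity bound
  have hpt : ∀ i : ℕ, i < n - 1 →
      g (((i:ℝ) + 1) / n) ≤ (1 - ((i:ℝ)+1)/n) * g (((i:ℝ)+1)/((n:ℝ)+1))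
        + (((i:ℝ)+1)/n) * g (((i:ℝ)+2)/((n:ℝ)+1)) := by
    intro i hi
    have hi' : (i:ℝ) + 1 < n := by
      have : i + 1 < n := by omega
      exact_mod_cast this
    have h1 : ((i:ℝ) + 1) / ((n:ℝ) + 1) ∈ Set.Ioo (0:ℝ) 1 := hmem i (by omega)
    have h2 : ((i:ℝ) + 2) / ((n:ℝ) + 1) ∈ Set.Ioo (0:ℝ) 1 := by
      have := hmem (i+1) (by omega)
      push_cast at this
      convert this using 2 <;> ring
    have ha : (0:ℝ) ≤ 1 - ((i:ℝ)+1)/n := by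
      rw [sub_nonneg, div_le_one hnR]; linarith
    have hb : (0:ℝ) ≤ ((i:ℝ)+1)/n := by positivity
    have hab : (1 - ((i:ℝ)+1)/n) + ((i:ℝ)+1)/n = 1 := by ring
    have := convex_one_div_sin.2 h1 h2 ha hb hab
    simp only [smul_eq_mul] at this
    have hcomb : (1 - ((i:ℝ)+1)/n) * (((i:ℝ) + 1) / ((n:ℝ) + 1))
        + (((i:ℝ)+1)/n) * (((i:ℝ) + 2) / ((n:ℝ) + 1)) = ((i:ℝ)+1)/n := by
      field_simp
      ring
    rw [hcomb] at this
    exact this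
  -- sum inequality
  have hsum : ∑ i ∈ Finset.range (n-1), g (((i:ℝ)+1)/n)
      ≤ (((n:ℝ)-1)/n) * ∑ i ∈ Finset.range n, g (((i:ℝ)+1)/((n:ℝ)+1)) := by
    have step1 : ∑ i ∈ Finset.range (n-1), g (((i:ℝ)+1)/n)
        ≤ ∑ i ∈ Finset.range (n-1), ((1 - ((i:ℝ)+1)/n) * g (((i:ℝ)+1)/((n:ℝ)+1))
          + (((i:ℝ)+1)/n) * g (((i:ℝ)+2)/((n:ℝ)+1))) :=
      Finset.sum_le_sum (fun i hi => hpt i (Finset.mem_range.1 hi))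
    have split : ∑ i ∈ Finset.range (n-1), ((1 - ((i:ℝ)+1)/n) * g (((i:ℝ)+1)/((n:ℝ)+1))
          + (((i:ℝ)+1)/n) * g (((i:ℝ)+2)/((n:ℝ)+1)))
        = ∑ i ∈ Finset.range (n-1), (1 - ((i:ℝ)+1)/n) * g (((i:ℝ)+1)/((n:ℝ)+1))
          + ∑ i ∈ Finset.range (n-1), (((i:ℝ)+1)/n) * g (((i:ℝ)+2)/((n:ℝ)+1)) :=
      Finset.sum_add_distrib
    -- first sum: extend to range n, the added term (i = n-1) is zero
    have hA : ∑ i ∈ Finset.range (n-1), (1 - ((i:ℝ)+1)/n) * g (((i:ℝ)+1)/((n:ℝ)+1))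
        = ∑ i ∈ Finset.range n, (1 - ((i:ℝ)+1)/n) * g (((i:ℝ)+1)/((n:ℝ)+1)) := by
      have hne : (n-1) + 1 = n := by omega
      have hss := Finset.sum_range_succ
        (fun i : ℕ => (1 - ((i:ℝ)+1)/n) * g (((i:ℝ)+1)/((n:ℝ)+1))) (n-1)
      rw [hne] at hss
      rw [hss]
      have hcast : ((n - 1 : ℕ) : ℝ) = (n:ℝ) - 1 := by
        have : (1:ℕ) ≤ n := by omega
        push_cast [this]
        ring
      simp only [hcast]
      have hz : (1 - ((n:ℝ) - 1 + 1)/n) = 0 := by field_simp; ring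
      rw [hz, zero_mul, add_zero]
    -- second sum: shift index
    have hB : ∑ i ∈ Finset.range (n-1), (((i:ℝ)+1)/n) * g (((i:ℝ)+2)/((n:ℝ)+1))
        = ∑ i ∈ Finset.range n, ((i:ℝ)/n) * g (((i:ℝ)+1)/((n:ℝ)+1)) := by
      have hne : (n-1) + 1 = n := by omega
      have hss := Finset.sum_range_succ'
        (fun i : ℕ => ((i:ℝ)/n) * g (((i:ℝ)+1)/((n:ℝ)+1))) (n-1)
      rw [hne] at hss
      rw [hss]
      simp only [Nat.cast_zero, zero_div, zero_mul, add_zero, Nat.cast_add, Nat.cast_one]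
      apply Finset.sum_congr rfl
      intro i _
      have h22 : ((i:ℝ) + 1 + 1) = (i:ℝ) + 2 := by ring
      rw [h22]
    rw [split, hA, hB, ← Finset.sum_add_distrib] at step1
    calc ∑ i ∈ Finset.range (n-1), g (((i:ℝ)+1)/n) ≤ _ := step1
      _ = (((n:ℝ)-1)/n) * ∑ i ∈ Finset.range n, g (((i:ℝ)+1)/((n:ℝ)+1)) := by
        rw [Finset.mul_sum]
        apply Finset.sum_congr rfl
        intro i _
        have hne0 : (n:ℝ) ≠ 0 := hnR.ne'
        field_simp
        ring
  -- nonnegativity of the refined sum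
  have hS2 : 0 ≤ ∑ i ∈ Finset.range n, g (((i:ℝ)+1)/((n:ℝ)+1)) := by
    apply Finset.sum_nonneg
    intro i hi
    have h := hmem i (Finset.mem_range.1 hi)
    have : 0 < Real.sin (π * (((i:ℝ)+1)/((n:ℝ)+1))) := by
      apply Real.sin_pos_of_pos_of_lt_pi
      · exact mul_pos Real.pi_pos h.1
      · nlinarith [Real.pi_pos, h.2]
    exact le_of_lt (by positivity)
  -- assemble
  rw [deltaN_eq n (by omega), deltaN_eq (n+1) (by omega)]
  simp only [Nat.add_sub_cancel, Nat.cast_add, Nat.cast_one]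
  have key : (1 / (4 * (n:ℝ))) * ∑ i ∈ Finset.range (n-1), g (((i:ℝ)+1)/n)
      ≤ (1 / (4 * ((n:ℝ)+1))) * ∑ i ∈ Finset.range n, g (((i:ℝ)+1)/((n:ℝ)+1)) := by
    calc (1 / (4 * (n:ℝ))) * ∑ i ∈ Finset.range (n-1), g (((i:ℝ)+1)/n)
        ≤ (1 / (4 * (n:ℝ))) * ((((n:ℝ)-1)/n) * ∑ i ∈ Finset.range n, g (((i:ℝ)+1)/((n:ℝ)+1))) := by
          apply mul_le_mul_of_nonneg_left hsum (by positivity)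
      _ ≤ (1 / (4 * ((n:ℝ)+1))) * ∑ i ∈ Finset.range n, g (((i:ℝ)+1)/((n:ℝ)+1)) := by
          rw [← mul_assoc]
          apply mul_le_mul_of_nonneg_right _ hS2
          have heq : (1:ℝ)/(4*(n:ℝ)) * (((n:ℝ)-1)/n) = ((n:ℝ)-1)/(4*(n:ℝ)*(n:ℝ)) := by
            ring
          rw [heq, div_le_div_iff₀ (by positivity) (by positivity)]
          nlinarith [hnR]
  linarith [key]

lemma deltaN_mono {m n : ℕ} (hm : 2 ≤ m) (hmn : m ≤ n) : deltaN m ≤ deltaN n := by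
  induction n with
  | zero => omega
  | succ k ih =>
    rcases Nat.lt_or_ge m (k+1) with h | h
    · have hk : m ≤ k := by omega
      exact le_trans (ih hk) (deltaN_mono_step k (by omega))
    · have : m = k + 1 := by omega
      rw [this]

lemma deltaN_472_neg : deltaN 472 < 0 := by
  have hmain : ∑ l ∈ Finset.Icc (1:ℕ) 471, 1 / Real.sin (π * (l:ℝ) / 472) < 1888 := by
    have h1 : ∑ l ∈ Finset.Icc (1:ℕ) 471, 1 / Real.sin (π * (l:ℝ) / 472)
        ≤ ∑ l ∈ Finset.Icc (1:ℕ) 471, (c472 l : ℝ) / 2^24 := Finset.sum_le_sum term_upper_472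
    have h2 : ∑ l ∈ Finset.Icc (1:ℕ) 471, (c472 l : ℝ) / 2^24
        = ((∑ l ∈ Finset.Icc (1:ℕ) 471, c472 l : ℕ) : ℝ) / 2^24 := by
      rw [← Finset.sum_div]
      push_cast
      ring
    have h3 : ((∑ l ∈ Finset.Icc (1:ℕ) 471, c472 l : ℕ) : ℝ) / 2^24 < 1888 := by
      rw [div_lt_iff₀ (by positivity)]
      exact_mod_cast c472_sum
    linarith
  have h4 : deltaN 472 = (1/(4*(472:ℝ))) *
      ∑ l ∈ Finset.Icc (1:ℕ) 471, 1 / Real.sin (π * (l:ℝ) / 472) - 1 := by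
    unfold deltaN
    norm_num
  rw [h4]
  nlinarith [hmain]

lemma deltaN_473_pos : 0 < deltaN 473 := by
  have hmain : (1892:ℝ) < ∑ l ∈ Finset.Icc (1:ℕ) 472, 1 / Real.sin (π * (l:ℝ) / 473) := by
    have h1 : ∑ l ∈ Finset.Icc (1:ℕ) 472, (c473 l : ℝ) / 2^24
        ≤ ∑ l ∈ Finset.Icc (1:ℕ) 472, 1 / Real.sin (π * (l:ℝ) / 473) :=
      Finset.sum_le_sum term_lower_473
    have h2 : ∑ l ∈ Finset.Icc (1:ℕ) 472, (c473 l : ℝ) / 2^24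
        = ((∑ l ∈ Finset.Icc (1:ℕ) 472, c473 l : ℕ) : ℝ) / 2^24 := by
      rw [← Finset.sum_div]
      push_cast
      ring
    have h3 : (1892:ℝ) < ((∑ l ∈ Finset.Icc (1:ℕ) 472, c473 l : ℕ) : ℝ) / 2^24 := by
      rw [lt_div_iff₀ (by positivity)]
      exact_mod_cast c473_sum
    linarith
  have h4 : deltaN 473 = (1/(4*(473:ℝ))) *
      ∑ l ∈ Finset.Icc (1:ℕ) 472, 1 / Real.sin (π * (l:ℝ) / 473) - 1 := by
    unfold deltaN
    norm_num
  rw [h4]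
  nlinarith [hmain]

/-- `δ_n < 0` for `2 ≤ n ≤ 472`, `δ_n > 0` for `n ≥ 473`; in particular `δ_n ≠ 0`
for every integer `n ≥ 2`. -/
theorem deltaN_sign :
    (∀ n : ℕ, 2 ≤ n → n ≤ 472 → deltaN n < 0) ∧
    (∀ n : ℕ, 473 ≤ n → 0 < deltaN n) ∧
    (∀ n : ℕ, 2 ≤ n → deltaN n ≠ 0) := by
  have hneg : ∀ n : ℕ, 2 ≤ n → n ≤ 472 → deltaN n < 0 := fun n h2 h472 =>
    lt_of_le_of_lt (deltaN_mono h2 h472) deltaN_472_neg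
  have hpos : ∀ n : ℕ, 473 ≤ n → 0 < deltaN n := fun n h473 =>
    lt_of_lt_of_le deltaN_473_pos (deltaN_mono (by omega) h473)
  refine ⟨hneg, hpos, fun n h2 => ?_⟩
  rcases le_or_gt n 472 with h | h
  · exact (hneg n h2 h).ne
  · exact (hpos n (by omega)).ne'
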